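/- For an idempotent measure μ on a compact Hausdorff space X with density d_μ, one has μ(φ) = max_{x∈X}(d_μ(x) + φ(x)) for all φ ∈ C(X); that is, every idempotent measure is recovered from its density. -/

import Mathlib

open Topology

noncomputable section

def IsIdempotentMeasure {Z : Type*} [TopologicalSpace Z] (μ : C(Z, ℝ) → ℝ) : Prop :=
  μ 1 = 1 ∧ (∀ (c : ℝ) (φ : C(Z, ℝ)), μ (ContinuousMap.const Z c + φ) = c + μ φ) ∧
    ∀ φ ψ : C(Z, ℝ), μ (φ ⊔ ψ) = max (μ φ) (μ ψ)

abbrev IM (Z : Type*) [TopologicalSpace Z] : Type _ :=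
  {μ : C(Z, ℝ) → ℝ // IsIdempotentMeasure μ}

def density {Z : Type*} [TopologicalSpace Z] (μ : C(Z, ℝ) → ℝ) (z : Z) : EReal :=
  ⨅ φ : {φ : C(Z, ℝ) // φ ≤ 0 ∧ φ z = 0}, ((μ φ.1 : ℝ) : EReal)

def pushforward {X Y : Type*} [TopologicalSpace X] [TopologicalSpace Y]
    (f : C(X, Y)) (μ : C(X, ℝ) → ℝ) : C(Y, ℝ) → ℝ :=
  fun ψ => μ (ψ.comp f)

def mpComb {τ : Type*} (α : EReal) (a b : τ → ℝ) : τ → ℝ :=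
  fun t => ((α + (a t : EReal)) ⊔ ((b t : ℝ) : EReal)).toReal

def MaxPlusConvex {τ : Type*} (A : Set (τ → ℝ)) : Prop :=
  ∀ a ∈ A, ∀ b ∈ A, ∀ α : EReal, α ≤ 0 → mpComb α a b ∈ A

def projCM {T : Type*} (A : Set (T → ℝ)) (t : T) : C(A, ℝ) :=
  ⟨fun a => a.1 t, (continuous_apply t).comp continuous_subtype_val⟩

def tilde {Z : Type*} [TopologicalSpace Z] (φ : C(Z, ℝ)) : C(IM Z, ℝ) :=
  ⟨fun ν => ν.1 φ, (continuous_apply φ).comp continuous_subtype_val⟩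

lemma mu_mono {Z : Type*} [TopologicalSpace Z] {μ : C(Z, ℝ) → ℝ}
    (hμ : IsIdempotentMeasure μ) {φ ψ : C(Z, ℝ)} (h : φ ≤ ψ) : μ φ ≤ μ ψ := by
  have h2 := hμ.2.2 φ ψ
  rw [sup_eq_right.mpr h] at h2
  rw [h2]
  exact le_max_left _ _

lemma density_add_le {Z : Type*} [TopologicalSpace Z] {μ : C(Z, ℝ) → ℝ}
    (hμ : IsIdempotentMeasure μ) (φ : C(Z, ℝ)) (x : Z) :
    density μ x + (φ x : EReal) ≤ ((μ φ : ℝ) : EReal) := by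
  set ψ : C(Z, ℝ) := (φ - ContinuousMap.const Z (φ x)) ⊓ 0 with hψ
  have hle : ψ ≤ 0 := inf_le_right
  have hx : ψ x = 0 := by
    simp [hψ]
  have hd : density μ x ≤ ((μ ψ : ℝ) : EReal) :=
    iInf_le (fun φ' : {φ' : C(Z, ℝ) // φ' ≤ 0 ∧ φ' x = 0} => ((μ φ'.1 : ℝ) : EReal)) ⟨ψ, hle, hx⟩
  have hsum : μ ψ + φ x ≤ μ φ := by
    have hpt : ContinuousMap.const Z (φ x) + ψ ≤ φ := by
      rw [ContinuousMap.le_def]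
      intro y
      simp only [hψ, ContinuousMap.add_apply, ContinuousMap.const_apply,
        ContinuousMap.inf_apply, ContinuousMap.sub_apply, ContinuousMap.zero_apply]
      have h := inf_le_left (a := φ y - φ x) (b := (0:ℝ))
      linarith
    calc μ ψ + φ x = φ x + μ ψ := add_comm _ _
      _ = μ (ContinuousMap.const Z (φ x) + ψ) := (hμ.2.1 _ _).symm
      _ ≤ μ φ := mu_mono hμ hpt
  calc density μ x + (φ x : EReal)
      ≤ ((μ ψ : ℝ) : EReal) + (φ x : EReal) := add_le_add_left hd _
    _ = ((μ ψ + φ x : ℝ) : EReal) := (EReal.coe_add _ _).symm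
    _ ≤ ((μ φ : ℝ) : EReal) := EReal.coe_le_coe_iff.mpr hsum

lemma exists_attain {X : Type*} [TopologicalSpace X] [CompactSpace X]
    {μ : C(X, ℝ) → ℝ} (hμ : IsIdempotentMeasure μ) (φ : C(X, ℝ)) :
    ∃ x : X, ((μ φ : ℝ) : EReal) ≤ density μ x + (φ x : EReal) := by
  rcases isEmpty_or_nonempty X with h | hne
  · exfalso
    have h1 := hμ.2.1 1 0
    have h0 : ContinuousMap.const X (1 : ℝ) + 0 = 0 := by
      ext y; exact (h.false y).elim
    rw [h0] at h1
    linarith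
  by_contra hc
  push_neg at hc
  have hwit : ∀ x : X, ∃ ψ : C(X, ℝ), ψ ≤ 0 ∧ ψ x = 0 ∧ μ ψ < μ φ - φ x := by
    intro x
    have h1 : density μ x < ((μ φ - φ x : ℝ) : EReal) := by
      by_contra h2
      push_neg at h2
      have h3 := add_le_add_left h2 ((φ x : ℝ) : EReal)
      rw [← EReal.coe_add] at h3
      have h4 : μ φ - φ x + φ x = μ φ := by ring
      rw [h4] at h3
      exact absurd (lt_of_le_of_lt h3 (hc x)) (lt_irrefl _)
    rw [density, iInf_lt_iff] at h1
    obtain ⟨⟨ψ, hle, hx⟩, hlt⟩ := h1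
    exact ⟨ψ, hle, hx, EReal.coe_lt_coe_iff.mp hlt⟩
  choose ψ hψle hψx hψμ using hwit
  obtain ⟨δ, hδ⟩ : ∃ δ : X → ℝ, ∀ x, δ x = μ φ - φ x - μ (ψ x) := ⟨_, fun _ => rfl⟩
  have hδpos : ∀ x, 0 < δ x := by
    intro x
    have := hψμ x
    rw [hδ x]
    linarith
  set U : X → Set X := fun x => {y | -(δ x) / 4 < ψ x y ∧ φ y < φ x + δ x / 4} with hU
  have hUopen : ∀ x, IsOpen (U x) := by
    intro x
    exact (isOpen_lt continuous_const (ψ x).continuous).inter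
      (isOpen_lt φ.continuous continuous_const)
  have hcover : (Set.univ : Set X) ⊆ ⋃ x, U x := by
    intro y _
    refine Set.mem_iUnion.mpr ⟨y, ?_, ?_⟩
    · rw [hψx y]
      have := hδpos y; linarith
    · have := hδpos y; linarith
  obtain ⟨t, ht⟩ := isCompact_univ.elim_finite_subcover U hUopen hcover
  have htne : t.Nonempty := by
    obtain ⟨y⟩ := hne
    obtain ⟨i, hi⟩ := Set.mem_iUnion.mp (ht (Set.mem_univ y))
    simp only [Set.mem_iUnion] at hi
    obtain ⟨hit, _⟩ := hi
    exact ⟨i, hit⟩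
  set g : C(X, ℝ) := t.sup' htne (fun i => ContinuousMap.const X (φ i + δ i / 2) + ψ i) with hg
  have hφg : φ ≤ g := by
    rw [ContinuousMap.le_def]
    intro y
    obtain ⟨i, hi⟩ := Set.mem_iUnion.mp (ht (Set.mem_univ y))
    simp only [Set.mem_iUnion] at hi
    obtain ⟨hit, hy1, hy2⟩ := hi
    have h1 : φ y ≤ (ContinuousMap.const X (φ i + δ i / 2) + ψ i) y := by
      simp only [ContinuousMap.add_apply, ContinuousMap.const_apply]
      linarith
    refine h1.trans ?_
    rw [hg, ContinuousMap.sup'_apply]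
    exact Finset.le_sup' (fun i => (ContinuousMap.const X (φ i + δ i / 2) + ψ i) y) hit
  have hμg : μ g = t.sup' htne (fun i => φ i + δ i / 2 + μ (ψ i)) := by
    rw [hg, Finset.comp_sup'_eq_sup'_comp htne μ (fun a b => hμ.2.2 a b)]
    congr 1
    funext i
    exact hμ.2.1 _ _
  have hlt : μ g < μ φ := by
    rw [hμg, Finset.sup'_lt_iff]
    intro i hit
    have h1 := hδpos i
    have h2 : δ i = μ φ - φ i - μ (ψ i) := hδ i
    linarith
  exact absurd (mu_mono hμ hφg) (not_le.mpr hlt)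

theorem idempotentMeasure_eq_sup_density {X : Type*} [TopologicalSpace X] [CompactSpace X]
    [T2Space X] (μ : C(X, ℝ) → ℝ) (hμ : IsIdempotentMeasure μ) :
    ∀ φ : C(X, ℝ), ((μ φ : ℝ) : EReal) = (⨆ x : X, density μ x + (φ x : EReal)) ∧
      ∃ x : X, ((μ φ : ℝ) : EReal) = density μ x + (φ x : EReal) := by
  intro φ
  obtain ⟨x, hx⟩ := exists_attain hμ φ
  constructor
  · exact le_antisymm (hx.trans (le_iSup (fun x => density μ x + (φ x : EReal)) x))
      (iSup_le fun y => density_add_le hμ φ y)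
  · exact ⟨x, le_antisymm hx (density_add_le hμ φ x)⟩
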